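/- Let k ≥ 1 and let G be a graph containing two disjoint vertex sets A and B with |A| ≥ 2k+1 and |B| ≥ 2k+1 such that every vertex of A is adjacent to every vertex of B. If G has an edge with both endpoints in A and also an edge with both endpoints in B, then G contains a subgraph isomorphic to C_{2k+1}□P_2. -/
import Mathlib


open SimpleGraph

/-- `CopyIn H G` means `G` contains a subgraph isomorphic to `H`,
i.e. there is an injective graph homomorphism from `H` to `G`. -/
def CopyIn {α β : Type*} (H : SimpleGraph α) (G : SimpleGraph β) : Prop :=
  ∃ f : α ↪ β, ∀ a b, H.Adj a b → G.Adj (f a) (f b)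

/-- The Turán number `ex(n, H)`: the maximum number of edges in an
`H`-free graph on `n` vertices. -/
noncomputable def exNum {α : Type*} (n : ℕ) (H : SimpleGraph α) : ℕ :=
  sSup {m : ℕ | ∃ G : SimpleGraph (Fin n), ¬ CopyIn H G ∧ G.edgeSet.ncard = m}

/-- The odd prism `C_{2k+1} □ P_2`. -/
def oddPrism (k : ℕ) : SimpleGraph (Fin (2 * k + 1) × Fin 2) :=
  cycleGraph (2 * k + 1) □ pathGraph 2

/-- Selection lemma: an injective enumeration of part of `A` putting `u` at
position `0` and `v` at position `k`. -/
lemma exists_inj_enum {V : Type*} (k : ℕ) (hk : 1 ≤ k) (A : Set V) (u v : V)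
    (hu : u ∈ A) (hv : v ∈ A) (huv : u ≠ v) (hA : (2 * k + 1 : ℕ) ≤ A.encard) :
    ∃ f : Fin (2 * k + 1) → V, Function.Injective f ∧ (∀ i, f i ∈ A) ∧
      f 0 = u ∧ f ⟨k, by omega⟩ = v := by
  have hsub : ({u, v} : Set V) ⊆ A :=
    Set.insert_subset hu (Set.singleton_subset_iff.mpr hv)
  have hcard : ({u, v} : Set V).encard ≤ (2 * k + 1 : ℕ) := by
    rw [Set.encard_pair huv]
    exact_mod_cast (by omega : (2 : ℕ) ≤ 2 * k + 1)
  obtain ⟨S, hS1, hS2, hS3⟩ := Set.exists_superset_subset_encard_eq hsub hcard hA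
  have hfin : S.Finite := Set.finite_of_encard_eq_coe hS3
  have : Finite S := hfin.to_subtype
  have hcardS : Nat.card S = 2 * k + 1 := by
    rw [Nat.card_coe_set_eq, Set.ncard_def, hS3, ENat.toNat_coe]
  let E : Fin (2 * k + 1) ≃ S := (Finite.equivFinOfCardEq hcardS).symm
  have huS : u ∈ S := hS1 (by simp)
  have hvS : v ∈ S := hS1 (by simp)
  let p1 : Equiv.Perm (Fin (2 * k + 1)) := Equiv.swap 0 (E.symm ⟨u, huS⟩)
  let E1 : Fin (2 * k + 1) ≃ S := p1.trans E
  have hE1 : E1 0 = ⟨u, huS⟩ := by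
    simp [E1, p1, Equiv.swap_apply_left]
  let kk : Fin (2 * k + 1) := ⟨k, by omega⟩
  let p2 : Equiv.Perm (Fin (2 * k + 1)) := Equiv.swap kk (E1.symm ⟨v, hvS⟩)
  let E2 : Fin (2 * k + 1) ≃ S := p2.trans E1
  have hE2k : E2 kk = ⟨v, hvS⟩ := by
    simp [E2, p2, Equiv.swap_apply_left]
  have hE20 : E2 0 = ⟨u, huS⟩ := by
    have h1 : (0 : Fin (2 * k + 1)) ≠ kk := by
      simp only [ne_eq, Fin.ext_iff, Fin.val_zero, kk]
      omega
    have h2 : (0 : Fin (2 * k + 1)) ≠ E1.symm ⟨v, hvS⟩ := by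
      intro h
      apply huv
      have : E1 0 = ⟨v, hvS⟩ := by rw [h, Equiv.apply_symm_apply]
      have := this.symm.trans hE1
      exact (Subtype.ext_iff.mp this).symm
    show E1 (p2 0) = _
    rw [show p2 0 = 0 from Equiv.swap_apply_of_ne_of_ne h1 h2]
    exact hE1
  refine ⟨fun i => (E2 i : V), ?_, fun i => hS2 (E2 i).2, ?_, ?_⟩
  · intro i j h
    exact E2.injective (Subtype.ext h)
  · exact congrArg Subtype.val hE20
  · exact congrArg Subtype.val hE2k

lemma cycle_adj_cases {k : ℕ} {u v : Fin (2 * k + 1)}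
    (h : (cycleGraph (2 * k + 1)).Adj u v) :
    u.val + 1 = v.val ∨ v.val + 1 = u.val ∨ (u.val = 0 ∧ v.val = 2 * k) ∨
      (v.val = 0 ∧ u.val = 2 * k) := by
  rw [cycleGraph_adj'] at h
  have h1 : (u - v).val = ((2 * k + 1 - v.val) + u.val) % (2 * k + 1) := by
    rw [Fin.sub_def]
  have h2 : (v - u).val = ((2 * k + 1 - u.val) + v.val) % (2 * k + 1) := by
    rw [Fin.sub_def]
  have hu := u.isLt
  have hv := v.isLt
  have aux : ∀ x : ℕ, x < 2 * (2 * k + 1) →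
      x % (2 * k + 1) = x ∨ x % (2 * k + 1) = x - (2 * k + 1) := by
    intro x hx
    rcases Nat.lt_or_ge x (2 * k + 1) with h' | h'
    · exact Or.inl (Nat.mod_eq_of_lt h')
    · right
      rw [Nat.mod_eq_sub_mod h', Nat.mod_eq_of_lt (by omega)]
  have aux1 := aux ((2 * k + 1 - v.val) + u.val) (by omega)
  have aux2 := aux ((2 * k + 1 - u.val) + v.val) (by omega)
  omega

/-- Let `k ≥ 1` and let `G` contain disjoint vertex sets `A`, `B`,
each of size at least `2k + 1`, completely joined to each other. If `G` has an edge
inside `A` and an edge inside `B`, then `G` contains a copy of `C_{2k+1} □ P_2`. -/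
theorem prism_from_two_edges {V : Type*} (k : ℕ) (hk : 1 ≤ k)
    (G : SimpleGraph V) (A B : Set V) (hAB : Disjoint A B)
    (hA : (2 * k + 1 : ℕ) ≤ A.encard) (hB : (2 * k + 1 : ℕ) ≤ B.encard)
    (hjoin : ∀ a ∈ A, ∀ b ∈ B, G.Adj a b)
    (heA : ∃ u ∈ A, ∃ v ∈ A, G.Adj u v)
    (heB : ∃ u ∈ B, ∃ v ∈ B, G.Adj u v) :
    CopyIn (oddPrism k) G := by
  obtain ⟨u, hu, v, hv, huv⟩ := heA
  obtain ⟨u', hu', v', hv', huv'⟩ := heB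
  obtain ⟨aF, haInj, haMem, ha0, hak⟩ :=
    exists_inj_enum k hk A u v hu hv huv.ne hA
  obtain ⟨bF, hbInj, hbMem, hb0, hbk⟩ :=
    exists_inj_enum k hk B u' v' hu' hv' huv'.ne hB
  -- the reindexing bijection
  let g : Fin (2 * k + 1) → Fin (2 * k + 1) := fun i =>
    if h : i.val % 2 = 0 then ⟨i.val / 2, by have := i.isLt; omega⟩
    else ⟨k + 1 + i.val / 2, by have := i.isLt; omega⟩
  have hgInj : Function.Injective g := by
    intro i j hij
    have hi2 := i.isLt
    have hj2 := j.isLt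
    by_cases hi : i.val % 2 = 0 <;> by_cases hj : j.val % 2 = 0 <;>
      simp only [g, hi, hj, dif_pos, dif_neg, Fin.ext_iff, Fin.mk.injEq,
        not_false_iff] at hij ⊢ <;> omega
  -- the embedding
  let F : Fin (2 * k + 1) × Fin 2 → V := fun p =>
    if (p.1.val + p.2.val) % 2 = 0 then aF (g p.1) else bF (g p.1)
  have hF0 : ∀ p : Fin (2 * k + 1) × Fin 2,
      (p.1.val + p.2.val) % 2 = 0 → F p = aF (g p.1) := fun p hp => if_pos hp
  have hF1 : ∀ p : Fin (2 * k + 1) × Fin 2,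
      (p.1.val + p.2.val) % 2 = 1 → F p = bF (g p.1) := fun p hp =>
    if_neg (by omega)
  have hne : ∀ x y, aF x ≠ bF y := by
    intro x y h
    exact Set.disjoint_left.mp hAB (haMem x) (h ▸ hbMem y)
  have hFinj : Function.Injective F := by
    intro p q hpq
    have hp2 := p.2.isLt
    have hq2 := q.2.isLt
    rcases Nat.mod_two_eq_zero_or_one (p.1.val + p.2.val) with hp | hp <;>
      rcases Nat.mod_two_eq_zero_or_one (q.1.val + q.2.val) with hq | hq
    · rw [hF0 p hp, hF0 q hq] at hpq
      have h1 : p.1 = q.1 := hgInj (haInj hpq)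
      have h2 : p.2 = q.2 := by
        rw [h1] at hp
        exact Fin.ext (by omega)
      exact Prod.ext h1 h2
    · rw [hF0 p hp, hF1 q hq] at hpq
      exact absurd hpq (hne _ _)
    · rw [hF1 p hp, hF0 q hq] at hpq
      exact absurd hpq.symm (hne _ _)
    · rw [hF1 p hp, hF1 q hq] at hpq
      have h1 : p.1 = q.1 := hgInj (hbInj hpq)
      have h2 : p.2 = q.2 := by
        rw [h1] at hp
        exact Fin.ext (by omega)
      exact Prod.ext h1 h2
  -- mixed-parity pairs are joined by `hjoin`
  have hdiff : ∀ p q : Fin (2 * k + 1) × Fin 2,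
      (p.1.val + p.2.val) % 2 ≠ (q.1.val + q.2.val) % 2 → G.Adj (F p) (F q) := by
    intro p q h
    rcases Nat.mod_two_eq_zero_or_one (p.1.val + p.2.val) with hp | hp <;>
      rcases Nat.mod_two_eq_zero_or_one (q.1.val + q.2.val) with hq | hq
    · exact absurd (hp.trans hq.symm) h
    · rw [hF0 p hp, hF1 q hq]
      exact hjoin _ (haMem _) _ (hbMem _)
    · rw [hF1 p hp, hF0 q hq]
      exact (hjoin _ (haMem _) _ (hbMem _)).symm
    · exact absurd (hp.trans hq.symm) h
  -- the two special `g`-values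
  have hg0 : g (0 : Fin (2 * k + 1)) = 0 := by
    simp only [g]
    rw [dif_pos (by simp)]
    simp
  have hg2k : g ⟨2 * k, by omega⟩ = ⟨k, by omega⟩ := by
    simp only [g]
    rw [dif_pos (by omega)]
    simp only [Fin.mk.injEq]
    omega
  refine ⟨⟨F, hFinj⟩, ?_⟩
  intro a b hadj
  simp only [Function.Embedding.coeFn_mk]
  rw [oddPrism, boxProd_adj] at hadj
  rcases hadj with ⟨hcyc, hj⟩ | ⟨hpath, hi⟩
  · -- cycle edge within a layer
    rcases cycle_adj_cases hcyc with h | h | ⟨h1, h2⟩ | ⟨h1, h2⟩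
    · exact hdiff _ _ (by rw [hj]; omega)
    · exact hdiff _ _ (by rw [hj]; omega)
    · -- wrap edge: a.1 = 0, b.1 = 2k
      have ha1 : a.1 = (0 : Fin (2 * k + 1)) := Fin.ext h1
      have hb1 : b.1 = (⟨2 * k, by omega⟩ : Fin (2 * k + 1)) := Fin.ext h2
      have hj2 := a.2.isLt
      rcases Nat.mod_two_eq_zero_or_one (a.1.val + a.2.val) with hp | hp
      · rw [hF0 a hp, hF0 b (by rw [← hj]; omega), ha1, hb1, hg0, hg2k, ha0, hak]
        exact huv
      · rw [hF1 a hp, hF1 b (by rw [← hj]; omega), ha1, hb1, hg0, hg2k, hb0, hbk]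
        exact huv'
    · have ha1 : a.1 = (⟨2 * k, by omega⟩ : Fin (2 * k + 1)) := Fin.ext h2
      have hb1 : b.1 = (0 : Fin (2 * k + 1)) := Fin.ext h1
      have hj2 := a.2.isLt
      rcases Nat.mod_two_eq_zero_or_one (a.1.val + a.2.val) with hp | hp
      · rw [hF0 a hp, hF0 b (by rw [← hj]; omega), ha1, hb1, hg0, hg2k, ha0, hak]
        exact huv.symm
      · rw [hF1 a hp, hF1 b (by rw [← hj]; omega), ha1, hb1, hg0, hg2k, hb0, hbk]
        exact huv'.symm
  · -- matching edge between layers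
    rw [pathGraph_adj] at hpath
    exact hdiff _ _ (by rw [hi]; omega)
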